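/- Let d ≥ 1 and let X be a nonempty compact subset of ℝ^d. Then there exists a set Z with X ⊆ Z ⊆ ℝ^d such that Z, with the subspace topology inherited from ℝ^d, is a Peano continuum, and Z ∖ X is the union of a countable (possibly empty) pairwise-disjoint family of sets, each of which is an open line segment {(1−t)·a + t·b : t ∈ (0,1)} for some distinct points a, b ∈ ℝ^d. -/

import Mathlib

open Filter Topology

/-- The unit `n`-sphere in `ℝ^(n+1)`. -/
abbrev Sph (n : ℕ) : Type :=
  Metric.sphere (0 : EuclideanSpace ℝ (Fin (n + 1))) 1

/-- The basepoint `s₀ = (1,0,…,0)` of the unit `n`-sphere. -/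
noncomputable def spherePt (n : ℕ) : Sph n :=
  ⟨EuclideanSpace.single 0 1, by
    simp [mem_sphere_zero_iff_norm, EuclideanSpace.norm_single]⟩

/-- A continuous map `S^n → X` is essential if it is not homotopic to a constant map. -/
def Essential {n : ℕ} {X : Type*} [TopologicalSpace X] (f : C(Sph n, X)) : Prop :=
  ∀ x : X, ¬ f.Homotopic (ContinuousMap.const (Sph n) x)

/-- `x` is a `π_n`-wild point of `X` if there is a sequence of essential maps
`S^n → X` based at `x` converging to the constant map at `x` in the compact-open
topology. -/
def IsWildPoint (n : ℕ) {X : Type*} [TopologicalSpace X] (x : X) : Prop :=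
  ∃ f : ℕ → C(Sph n, X),
    (∀ k, f k (spherePt n) = x) ∧
    (∀ k, Essential (f k)) ∧
    Tendsto f atTop (𝓝 (ContinuousMap.const (Sph n) x))

/-- The `π_n`-wild set of `X`. -/
def wildSet (n : ℕ) (X : Type*) [TopologicalSpace X] : Set X :=
  {x | IsWildPoint n x}

/-- A continuous map is `π_n`-injective if precomposition reflects inessentiality. -/
def PiNInjective (n : ℕ) {X Y : Type*} [TopologicalSpace X] [TopologicalSpace Y]
    (f : C(X, Y)) : Prop :=
  ∀ g : C(Sph n, X),
    (∃ y : Y, (f.comp g).Homotopic (ContinuousMap.const (Sph n) y)) →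
    ∃ x : X, g.Homotopic (ContinuousMap.const (Sph n) x)

/-- `X` is `π_n`-rigid at `x`. -/
def IsRigidAt (n : ℕ) {X : Type*} [TopologicalSpace X] (x : X) : Prop :=
  ∃ f : ℕ → C(Sph n, X),
    (∀ k, f k (spherePt n) = x) ∧
    (∀ k, Essential (f k)) ∧
    Tendsto f atTop (𝓝 (ContinuousMap.const (Sph n) x)) ∧
    ∀ β : C(unitInterval, X), β 0 = x →
      ∀ H : ℕ → C(Sph n × unitInterval, X),
        (∀ k s, H k (s, 0) = f k s) →
        (∀ k t, H k (spherePt n, t) = β t) →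
        Tendsto H atTop (𝓝 (β.comp (ContinuousMap.snd (α := Sph n)))) →
        β 1 = x

section Stmt18AuxSection
open Set Metric Bornology

namespace Stmt18Aux

noncomputable def rr (n : ℕ) : ℝ := (1/2 : ℝ) ^ n

lemma rr_pos (n : ℕ) : 0 < rr n := pow_pos (by norm_num) n

lemma rr_anti : ∀ {m n : ℕ}, m ≤ n → rr n ≤ rr m := by
  intro m n h
  exact pow_le_pow_of_le_one (by norm_num) (by norm_num) h

lemma rr_succ (n : ℕ) : rr (n + 1) = rr n / 2 := by
  simp [rr, pow_succ]; ring

lemma exists_rr_lt {ε : ℝ} (hε : 0 < ε) : ∃ n, rr n < ε := by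
  obtain ⟨n, hn⟩ := exists_pow_lt_of_lt_one hε (by norm_num : (1/2 : ℝ) < 1)
  exact ⟨n, hn⟩

variable {E : Type*} [NormedAddCommGroup E] [NormedSpace ℝ E]

/-- The family of closed segments used to augment `X`. -/
def Edges (t : ℕ → Set E) : Set (Set E) :=
  {S | ∃ n u v, u ∈ t n ∧ v ∈ t n ∧ (n = 0 ∨ dist u v ≤ 8 * rr n) ∧ S = segment ℝ u v}

def Zset (X : Set E) (t : ℕ → Set E) : Set E := X ∪ ⋃₀ Edges t

structure Nets (X : Set E) (t : ℕ → Set E) (ν : ℕ → E → E) : Prop where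
  fin : ∀ n, (t n).Finite
  sub : ∀ n, t n ⊆ X
  mono : ∀ n, t n ⊆ t (n + 1)
  mem : ∀ n, ∀ x ∈ X, ν n x ∈ t n
  close : ∀ n, ∀ x ∈ X, dist x (ν n x) < rr n

namespace Nets

variable {X : Set E} {t : ℕ → Set E} {ν : ℕ → E → E} (h : Nets X t ν)

lemma mono_le (h : Nets X t ν) {m n : ℕ} (hmn : m ≤ n) : t m ⊆ t n := by
  induction n with
  | zero => simpa [Nat.le_zero.mp hmn] using subset_rfl
  | succ k ih =>
    rcases Nat.lt_or_ge m (k+1) with hm | hm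
    · exact (ih (Nat.lt_succ_iff.mp hm)).trans (h.mono k)
    · have : m = k + 1 := le_antisymm hmn hm
      simpa [this] using subset_rfl

lemma nu_mem_X (h : Nets X t ν) (n : ℕ) {x : E} (hx : x ∈ X) : ν n x ∈ X :=
  h.sub n (h.mem n x hx)

lemma X_subset_Zset : X ⊆ Zset X t := subset_union_left

lemma edge_subset_Zset {S : Set E} (hS : S ∈ Edges t) : S ⊆ Zset X t :=
  (subset_sUnion_of_mem hS).trans subset_union_right

lemma segment_mem_edges (h : Nets X t ν) {n : ℕ} {u v : E} (hu : u ∈ t n) (hv : v ∈ t n)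
    (hd : n = 0 ∨ dist u v ≤ 8 * rr n) : segment ℝ u v ∈ Edges t :=
  ⟨n, u, v, hu, hv, hd, rfl⟩

/-- The chain joining `x ∈ X` to its `n`-th net approximation. -/
lemma chain (h : Nets X t ν) (n : ℕ) {x : E} (hx : x ∈ X) :
    ∃ c : Set E, IsPreconnected c ∧ c ⊆ Zset X t ∧ x ∈ c ∧ ν n x ∈ c ∧
      c ⊆ closedBall x (rr n) := by
  set seg : ℕ → Set E := fun m => segment ℝ (ν (n + m) x) (ν (n + m + 1) x) with hsegdef
  have hsegE : ∀ m, seg m ∈ Edges t := by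
    intro m
    refine h.segment_mem_edges (h.mono (n+m) (h.mem (n+m) x hx)) (h.mem (n+m+1) x hx) (Or.inr ?_)
    have h1 := h.close (n+m) x hx
    have h2 := h.close (n+m+1) x hx
    have hr : rr (n+m) = 2 * rr (n+m+1) := by rw [rr_succ]; ring
    calc dist (ν (n+m) x) (ν (n+m+1) x) ≤ dist (ν (n+m) x) x + dist x (ν (n+m+1) x) :=
          dist_triangle _ _ _
      _ ≤ rr (n+m) + rr (n+m+1) := by
          rw [dist_comm (ν (n+m) x) x]; exact add_le_add h1.le h2.le
      _ ≤ 8 * rr (n+m+1) := by rw [hr]; nlinarith [rr_pos (n+m+1)]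
  have hsegball : ∀ m, seg m ⊆ closedBall x (rr n) := by
    intro m
    refine (convex_closedBall x (rr n)).segment_subset ?_ ?_
    · have := h.close (n+m) x hx
      have h2 : rr (n+m) ≤ rr n := rr_anti (Nat.le_add_right n m)
      simp only [mem_closedBall, dist_comm]
      linarith
    · have := h.close (n+m+1) x hx
      have h2 : rr (n+m+1) ≤ rr n := rr_anti (by omega)
      simp only [mem_closedBall, dist_comm]
      linarith
  -- partial unions
  set P : ℕ → Set E := fun j => ⋃ m ∈ Finset.range (j+1), seg m with hPdef
  have hP0 : ∀ j, ν n x ∈ P j := by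
    intro j
    have h0 : ν (n + 0) x ∈ seg 0 := left_mem_segment ℝ _ _
    have : ν n x ∈ seg 0 := by simpa using h0
    exact mem_biUnion (Finset.mem_range.mpr (by omega)) this
  have hPconn : ∀ j, IsPreconnected (P j) := by
    intro j
    induction j with
    | zero =>
      have : P 0 = seg 0 := by simp [hPdef]
      rw [this]; exact (convex_segment _ _).isPreconnected
    | succ k ih =>
      have hPk : P (k+1) = P k ∪ seg (k+1) := by
        simp only [hPdef]
        rw [Finset.range_add_one]
        rw [Finset.set_biUnion_insert]
        exact union_comm _ _
      rw [hPk]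
      refine IsPreconnected.union (ν (n + k + 1) x) ?_ ?_ ih
          (convex_segment _ _).isPreconnected
      · exact mem_biUnion (Finset.self_mem_range_succ k) (right_mem_segment ℝ _ _)
      · have : ν (n + (k+1)) x ∈ seg (k+1) := left_mem_segment ℝ _ _
        simpa [Nat.add_assoc] using this
  set U : Set E := ⋃ m, seg m with hUdef
  have hUP : U = ⋃ j, P j := by
    apply subset_antisymm
    · exact iUnion_subset fun m => subset_iUnion_of_subset m (fun p hp => mem_biUnion (Finset.self_mem_range_succ m) hp)
    · exact iUnion_subset fun j => iUnion₂_subset fun m _ => subset_iUnion seg m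
  have hUconn : IsPreconnected U := by
    rw [hUP, ← sUnion_range]
    refine isPreconnected_sUnion (ν n x) _ ?_ ?_
    · rintro s ⟨j, rfl⟩; exact hP0 j
    · rintro s ⟨j, rfl⟩; exact hPconn j
  have hxcl : x ∈ closure U := by
    rw [Metric.mem_closure_iff]
    intro ε hε
    obtain ⟨k, hk⟩ := exists_rr_lt hε
    refine ⟨ν (n + k) x, mem_iUnion.mpr ⟨k, left_mem_segment ℝ _ _⟩, ?_⟩
    have := h.close (n+k) x hx
    have : dist x (ν (n+k) x) < rr k :=
      lt_of_lt_of_le this (rr_anti (Nat.le_add_left k n))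
    linarith
  refine ⟨insert x U, ?_, ?_, mem_insert _ _, ?_, ?_⟩
  · exact hUconn.subset_closure (subset_insert _ _)
      (insert_subset hxcl subset_closure)
  · refine insert_subset (X_subset_Zset hx) (iUnion_subset fun m => edge_subset_Zset (hsegE m))
  · refine mem_insert_of_mem _ (mem_iUnion.mpr ⟨0, ?_⟩)
    have : ν (n + 0) x ∈ seg 0 := left_mem_segment ℝ _ _
    simpa using this
  · refine insert_subset (mem_closedBall_self (rr_pos n).le) (iUnion_subset hsegball)


lemma dist_le_of_mem_segment {u v p : E} (hp : p ∈ segment ℝ u v) : dist p u ≤ dist u v := by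
  have : segment ℝ u v ⊆ closedBall u (dist u v) :=
    (convex_closedBall u (dist u v)).segment_subset (mem_closedBall_self dist_nonneg)
      (by simp [mem_closedBall, dist_comm])
  simpa [mem_closedBall] using this hp

lemma isClosed_seg (u v : E) : IsClosed (segment ℝ u v) := by
  rw [segment_eq_image]
  exact (isCompact_Icc.image (by fun_prop)).isClosed

/-- Bridge between two points of `X`. -/
lemma bridge (h : Nets X t ν) (n : ℕ) {x y : E} (hx : x ∈ X) (hy : y ∈ X)
    (hcase : n = 0 ∨ dist x y ≤ 6 * rr n) :
    ∃ c : Set E, IsPreconnected c ∧ c ⊆ Zset X t ∧ x ∈ c ∧ y ∈ c ∧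
      c ⊆ closedBall x (dist x y + rr n) := by
  obtain ⟨cx, cxconn, cxZ, hxcx, hνx, cxball⟩ := h.chain n hx
  obtain ⟨cy, cyconn, cyZ, hycy, hνy, cyball⟩ := h.chain n hy
  have h1 := h.close n x hx
  have h2 := h.close n y hy
  have hsE : segment ℝ (ν n x) (ν n y) ∈ Edges t := by
    refine h.segment_mem_edges (h.mem n x hx) (h.mem n y hy) ?_
    rcases hcase with h0 | hd
    · exact Or.inl h0
    · refine Or.inr ?_
      calc dist (ν n x) (ν n y)
          ≤ dist (ν n x) x + dist x y + dist y (ν n y) := dist_triangle4 _ _ _ _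
        _ ≤ rr n + 6 * rr n + rr n := by
            rw [dist_comm (ν n x) x]; exact add_le_add (add_le_add h1.le hd) h2.le
        _ = 8 * rr n := by ring
  have hsball : segment ℝ (ν n x) (ν n y) ⊆ closedBall x (dist x y + rr n) := by
    refine (convex_closedBall x _).segment_subset ?_ ?_
    · simp only [mem_closedBall, dist_comm (ν n x) x]
      have := dist_nonneg (x := x) (y := y); linarith
    · simp only [mem_closedBall]
      calc dist (ν n y) x ≤ dist (ν n y) y + dist y x := dist_triangle _ _ _
        _ ≤ dist x y + rr n := by rw [dist_comm (ν n y) y, dist_comm y x]; linarith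
  refine ⟨(cx ∪ segment ℝ (ν n x) (ν n y)) ∪ cy, ?_, ?_, ?_, ?_, ?_⟩
  · refine IsPreconnected.union (ν n y) ?_ hνy ?_ cyconn
    · exact Or.inr (right_mem_segment ℝ _ _)
    · exact IsPreconnected.union (ν n x) hνx (left_mem_segment ℝ _ _) cxconn
        (convex_segment _ _).isPreconnected
  · exact union_subset (union_subset cxZ (edge_subset_Zset hsE)) cyZ
  · exact Or.inl (Or.inl hxcx)
  · exact Or.inr hycy
  · refine union_subset (union_subset ?_ hsball) ?_
    · refine cxball.trans (closedBall_subset_closedBall ?_)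
      have := dist_nonneg (x := x) (y := y); linarith
    · intro p hp
      have := cyball hp
      simp only [mem_closedBall] at this ⊢
      calc dist p x ≤ dist p y + dist y x := dist_triangle _ _ _
        _ ≤ dist x y + rr n := by rw [dist_comm y x]; linarith

lemma zset_preconnected (h : Nets X t ν) {x₀ : E} (hx₀ : x₀ ∈ X) :
    IsPreconnected (Zset X t) := by
  refine isPreconnected_of_forall x₀ ?_
  rintro w hw
  rcases hw with hwX | ⟨S, hSE, hwS⟩
  · obtain ⟨c, hc, hcZ, h1, h2, -⟩ := h.bridge 0 hx₀ hwX (Or.inl rfl)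
    exact ⟨c, hcZ, h1, h2, hc⟩
  · obtain ⟨m, u, v, hu, hv, hcond, hSeq⟩ := hSE
    obtain ⟨c, hc, hcZ, h1, h2, -⟩ := h.bridge 0 hx₀ (h.sub m hu) (Or.inl rfl)
    refine ⟨c ∪ S, union_subset hcZ (edge_subset_Zset ⟨m, u, v, hu, hv, hcond, hSeq⟩),
      Or.inl h1, Or.inr hwS, ?_⟩
    refine IsPreconnected.union u h2 ?_ hc ?_
    · rw [hSeq]; exact left_mem_segment ℝ u v
    · rw [hSeq]; exact (convex_segment u v).isPreconnected

/-- Edges having a witness of level at most `N`. -/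
def EdgesLE (t : ℕ → Set E) (N : ℕ) : Set (Set E) :=
  {S | ∃ n, n ≤ N ∧ ∃ u v, u ∈ t n ∧ v ∈ t n ∧ (n = 0 ∨ dist u v ≤ 8 * rr n) ∧
    S = segment ℝ u v}

lemma edgesLE_subset (N : ℕ) : EdgesLE t N ⊆ Edges t := by
  rintro S ⟨n, -, u, v, hu, hv, hc, hS⟩
  exact ⟨n, u, v, hu, hv, hc, hS⟩

lemma edgesLE_isClosed {N : ℕ} {S : Set E} (hS : S ∈ EdgesLE t N) : IsClosed S := by
  obtain ⟨n, -, u, v, -, -, -, rfl⟩ := hS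
  exact isClosed_seg u v

lemma edgesLE_finite (h : Nets X t ν) (N : ℕ) : (EdgesLE t N).Finite := by
  have hsub : EdgesLE t N ⊆
      ⋃ n ∈ Finset.range (N+1), Set.image2 (segment ℝ) (t n) (t n) := by
    rintro S ⟨n, hn, u, v, hu, hv, -, rfl⟩
    exact mem_biUnion (Finset.mem_range.mpr (by omega)) (mem_image2_of_mem hu hv)
  refine (Set.Finite.biUnion (Finset.range (N+1)).finite_toSet
    (fun n _ => Set.Finite.image2 _ (h.fin n) (h.fin n))).subset hsub

lemma sUnion_edgesLE_isClosed (h : Nets X t ν) (N : ℕ) : IsClosed (⋃₀ EdgesLE t N) := by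
  rw [sUnion_eq_biUnion]
  exact (h.edgesLE_finite N).isClosed_biUnion (fun S hS => edgesLE_isClosed hS)

lemma edge_cases (h : Nets X t ν) {S : Set E} (hS : S ∈ Edges t) (N : ℕ) :
    S ∈ EdgesLE t N ∨ ∃ u ∈ X, S ⊆ closedBall u (8 * rr (N+1)) := by
  obtain ⟨n, u, v, hu, hv, hcond, rfl⟩ := hS
  rcases le_or_gt n N with hn | hn
  · exact Or.inl ⟨n, hn, u, v, hu, hv, hcond, rfl⟩
  · refine Or.inr ⟨u, h.sub n hu, ?_⟩
    have hd : dist u v ≤ 8 * rr n := by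
      rcases hcond with h0 | hd
      · exact absurd h0 (by omega)
      · exact hd
    intro p hp
    have h1 : dist p u ≤ dist u v := dist_le_of_mem_segment hp
    have h2 : rr n ≤ rr (N+1) := rr_anti hn
    simp only [mem_closedBall]
    linarith

lemma zset_subset_ball (h : Nets X t ν) {c₀ : E} {R : ℝ} (hR : X ⊆ closedBall c₀ R) :
    Zset X t ⊆ closedBall c₀ R := by
  rintro w (hwX | ⟨S, ⟨n, u, v, hu, hv, -, rfl⟩, hwS⟩)
  · exact hR hwX
  · exact (convex_closedBall c₀ R).segment_subset (hR (h.sub n hu)) (hR (h.sub n hv)) hwS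

lemma zset_isClosed (h : Nets X t ν) (hX : IsCompact X) (hne : X.Nonempty) :
    IsClosed (Zset X t) := by
  rw [← isOpen_compl_iff, Metric.isOpen_iff]
  intro z hz
  have hzX : z ∉ X := fun hzx => hz (X_subset_Zset hzx)
  have hδ : 0 < infDist z X := (hX.isClosed.notMem_iff_infDist_pos hne).mp hzX
  obtain ⟨N, hN⟩ := exists_rr_lt (show 0 < infDist z X / 8 by linarith)
  have hNfine : 8 * rr (N+1) < infDist z X := by
    have : rr (N+1) ≤ rr N := rr_anti (Nat.le_succ N)
    linarith
  set F := X ∪ ⋃₀ EdgesLE t N with hF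
  have hFclosed : IsClosed F := hX.isClosed.union (h.sUnion_edgesLE_isClosed N)
  have hzF : z ∉ F := by
    rintro (hzx | ⟨S, hS, hzS⟩)
    · exact hzX hzx
    · exact hz (edge_subset_Zset (edgesLE_subset N hS) hzS)
  obtain ⟨ρ₂, hρ₂pos, hρ₂⟩ := Metric.isOpen_iff.mp hFclosed.isOpen_compl z hzF
  refine ⟨min ρ₂ (infDist z X - 8 * rr (N+1)), by simp [hρ₂pos]; linarith, ?_⟩
  intro w hw
  simp only [mem_ball] at hw
  intro hwZ
  rcases hwZ with hwX | ⟨S, hSE, hwS⟩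
  · have : w ∈ F := Or.inl hwX
    have hwb : w ∈ ball z ρ₂ := by
      simp only [mem_ball]
      exact lt_of_lt_of_le hw (min_le_left _ _)
    exact (hρ₂ hwb) this
  · rcases h.edge_cases hSE N with hco | ⟨u, huX, hub⟩
    · have : w ∈ F := Or.inr ⟨S, hco, hwS⟩
      have hwb : w ∈ ball z ρ₂ := by
        simp only [mem_ball]
        exact lt_of_lt_of_le hw (min_le_left _ _)
      exact (hρ₂ hwb) this
    · have h1 : dist w u ≤ 8 * rr (N+1) := by simpa [mem_closedBall] using hub hwS
      have h2 : infDist z X ≤ dist z u := infDist_le_dist_of_mem huX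
      have h3 : dist z u ≤ dist z w + dist w u := dist_triangle _ _ _
      have h4 : dist z w < infDist z X - 8 * rr (N+1) := by
        rw [dist_comm]
        exact lt_of_lt_of_le hw (min_le_right _ _)
      linarith

lemma zset_isCompact [ProperSpace E] (h : Nets X t ν) (hX : IsCompact X) (hne : X.Nonempty) :
    IsCompact (Zset X t) := by
  obtain ⟨R, hR⟩ := hX.isBounded.subset_closedBall hne.choose
  exact isCompact_of_isClosed_isBounded (h.zset_isClosed hX hne)
    (isBounded_closedBall.subset (h.zset_subset_ball hR))

/-- Near any point of `Z`, nearby points of `Z` can be joined to it inside a small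
connected subset of `Z`. -/
lemma key (h : Nets X t ν) (hX : IsCompact X) (hne : X.Nonempty) {z : E}
    (hz : z ∈ Zset X t) {ε : ℝ} (hε : 0 < ε) :
    ∃ ρ > 0, ∀ w ∈ Zset X t, dist z w < ρ →
      ∃ c : Set E, IsPreconnected c ∧ c ⊆ Zset X t ∧ c ⊆ closedBall z ε ∧ z ∈ c ∧ w ∈ c := by
  have avoid : ∀ N : ℕ, ∃ ρ₂ > 0, ∀ S ∈ EdgesLE t N, z ∉ S → ∀ p ∈ S, ¬ dist z p < ρ₂ := by
    intro N
    set Bad : Set E := ⋃₀ {S ∈ EdgesLE t N | z ∉ S} with hBad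
    have hBadclosed : IsClosed Bad := by
      rw [hBad, sUnion_eq_biUnion]
      exact (((h.edgesLE_finite N).subset (sep_subset _ _))).isClosed_biUnion
        (fun S hS => edgesLE_isClosed hS.1)
    have hzBad : z ∉ Bad := by
      rintro ⟨S, ⟨hS1, hS2⟩, hzS⟩
      exact hS2 hzS
    obtain ⟨ρ₂, hρ₂pos, hρ₂⟩ := Metric.isOpen_iff.mp hBadclosed.isOpen_compl z hzBad
    refine ⟨ρ₂, hρ₂pos, ?_⟩
    intro S hS hzS p hp hlt
    exact hρ₂ (by simpa [mem_ball, dist_comm] using hlt) ⟨S, ⟨hS, hzS⟩, hp⟩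
  by_cases hzX : z ∈ X
  · -- z is a point of X
    obtain ⟨n, hn⟩ := exists_rr_lt (show 0 < ε/16 by linarith)
    obtain ⟨ρ₂, hρ₂pos, hρ₂⟩ := avoid n
    refine ⟨min ρ₂ (rr n), lt_min hρ₂pos (rr_pos n), ?_⟩
    intro w hw hd
    have hdrr : dist z w < rr n := lt_of_lt_of_le hd (min_le_right _ _)
    have hdρ₂ : dist z w < ρ₂ := lt_of_lt_of_le hd (min_le_left _ _)
    rcases hw with hwX | ⟨S, hSE, hwS⟩
    · obtain ⟨c, hc, hcZ, h1, h2, hball⟩ := h.bridge n hzX hwX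
        (Or.inr (by nlinarith [rr_pos n]))
      refine ⟨c, hc, hcZ, hball.trans (closedBall_subset_closedBall ?_), h1, h2⟩
      linarith
    · obtain ⟨m, u, v, hu, hv, hcond, hSeq⟩ := hSE
      rcases le_or_gt m n with hm | hm
      · -- coarse edge
        have hSL : S ∈ EdgesLE t n := ⟨m, hm, u, v, hu, hv, hcond, hSeq⟩
        by_cases hzS : z ∈ S
        · refine ⟨S ∩ closedBall z ε, ?_, inter_subset_left.trans
            (edge_subset_Zset (edgesLE_subset n hSL)), inter_subset_right, ?_, ?_⟩
          · rw [hSeq]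
            exact ((convex_segment u v).inter (convex_closedBall z ε)).isPreconnected
          · exact ⟨hzS, mem_closedBall_self hε.le⟩
          · refine ⟨hwS, ?_⟩
            simp only [mem_closedBall, dist_comm w z]
            linarith
        · exact absurd hdρ₂ (hρ₂ S hSL hzS w hwS)
      · -- fine edge
        have huX : u ∈ X := h.sub m hu
        have hduv : dist u v ≤ 8 * rr m := by
          rcases hcond with h0 | hd'
          · exact absurd h0 (by omega)
          · exact hd'
        have hwu : dist w u ≤ 8 * rr m := by
          have := dist_le_of_mem_segment (hSeq ▸ hwS)
          linarith
        have hrm : rr m ≤ rr n / 2 := by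
          have := rr_anti (show n + 1 ≤ m from hm)
          rw [rr_succ] at this
          linarith
        have hzu : dist z u ≤ 5 * rr n := by
          have := dist_triangle z w u
          linarith
        obtain ⟨c, hc, hcZ, h1, h2, hball⟩ := h.bridge n hzX huX
          (Or.inr (by nlinarith [rr_pos n]))
        have hSball : S ⊆ closedBall z (9 * rr n) := by
          intro p hp
          have hpu : dist p u ≤ 8 * rr m := by
            have := dist_le_of_mem_segment (hSeq ▸ hp)
            linarith
          simp only [mem_closedBall]
          calc dist p z ≤ dist p u + dist u z := dist_triangle _ _ _
            _ ≤ 9 * rr n := by rw [dist_comm u z]; linarith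
        refine ⟨c ∪ S, ?_, union_subset hcZ
          (edge_subset_Zset ⟨m, u, v, hu, hv, hcond, hSeq⟩), ?_, Or.inl h1, Or.inr hwS⟩
        · refine IsPreconnected.union u h2 ?_ hc ?_
          · rw [hSeq]; exact left_mem_segment ℝ u v
          · rw [hSeq]; exact (convex_segment u v).isPreconnected
        · refine union_subset (hball.trans (closedBall_subset_closedBall ?_))
            (hSball.trans (closedBall_subset_closedBall ?_)) <;> linarith
  · -- z is not in X
    have hδ : 0 < infDist z X := (hX.isClosed.notMem_iff_infDist_pos hne).mp hzX
    obtain ⟨N, hN⟩ := exists_rr_lt (show 0 < infDist z X / 8 by linarith)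
    have hNfine : 8 * rr (N+1) < infDist z X := by
      have : rr (N+1) ≤ rr N := rr_anti (Nat.le_succ N)
      linarith
    obtain ⟨ρ₂, hρ₂pos, hρ₂⟩ := avoid N
    refine ⟨min (min (infDist z X - 8 * rr (N+1)) ρ₂) ε,
      lt_min (lt_min (by linarith) hρ₂pos) hε, ?_⟩
    intro w hw hd
    have hd1 : dist z w < infDist z X - 8 * rr (N+1) :=
      lt_of_lt_of_le hd ((min_le_left _ _).trans (min_le_left _ _))
    have hd2 : dist z w < ρ₂ :=
      lt_of_lt_of_le hd ((min_le_left _ _).trans (min_le_right _ _))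
    have hd3 : dist z w < ε := lt_of_lt_of_le hd (min_le_right _ _)
    rcases hw with hwX | ⟨S, hSE, hwS⟩
    · exfalso
      have : infDist z X ≤ dist z w := infDist_le_dist_of_mem hwX
      have := rr_pos (N+1)
      linarith
    · rcases h.edge_cases hSE N with hco | ⟨u, huX, hub⟩
      · by_cases hzS : z ∈ S
        · obtain ⟨m, -, u, v, hu, hv, -, hSeq⟩ := hco
          refine ⟨S ∩ closedBall z ε, ?_, inter_subset_left.trans
            (edge_subset_Zset hSE), inter_subset_right, ⟨hzS, mem_closedBall_self hε.le⟩,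
            ⟨hwS, by simp only [mem_closedBall, dist_comm w z]; linarith⟩⟩
          rw [hSeq]
          exact ((convex_segment u v).inter (convex_closedBall z ε)).isPreconnected
        · exact absurd hd2 (hρ₂ S hco hzS w hwS)
      · exfalso
        have h1 : dist w u ≤ 8 * rr (N+1) := by simpa [mem_closedBall] using hub hwS
        have h2 : infDist z X ≤ dist z u := infDist_le_dist_of_mem huX
        have h3 : dist z u ≤ dist z w + dist w u := dist_triangle _ _ _
        linarith

lemma zset_locallyConnected (h : Nets X t ν) (hX : IsCompact X) (hne : X.Nonempty) :
    LocallyConnectedSpace ↥(Zset X t) := by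
  rw [locallyConnectedSpace_iff_connected_subsets]
  rintro ⟨z, hz⟩ U hU
  rw [nhds_subtype_eq_comap, Filter.mem_comap] at hU
  obtain ⟨V, hV, hVU⟩ := hU
  obtain ⟨ε, hεpos, hball⟩ := Metric.mem_nhds_iff.mp hV
  obtain ⟨ρ, hρpos, hkey⟩ := h.key hX hne hz (show 0 < ε/2 by linarith)
  set W := connectedComponentIn (Zset X t ∩ closedBall z (ε/2)) z with hWdef
  have hWsub : W ⊆ Zset X t ∩ closedBall z (ε/2) := connectedComponentIn_subset _ _
  have hzW : z ∈ W :=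
    mem_connectedComponentIn ⟨hz, mem_closedBall_self (by linarith)⟩
  set val : ↥(Zset X t) → E := Subtype.val with hval
  refine ⟨val ⁻¹' W, ?_, ?_, ?_⟩
  · have hsub : val ⁻¹' (ball z ρ) ⊆ val ⁻¹' W := by
      rintro ⟨w, hwZ⟩ hwb
      simp only [mem_preimage, mem_ball] at hwb ⊢
      obtain ⟨c, hcconn, hcZ, hcball, hzc, hwc⟩ := hkey w hwZ (by rwa [dist_comm])
      exact hcconn.subset_connectedComponentIn hzc (subset_inter hcZ hcball) hwc
    refine Filter.mem_of_superset (IsOpen.mem_nhds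
      (isOpen_ball.preimage continuous_subtype_val) ?_) hsub
    simp only [mem_preimage, mem_ball, dist_self]
    exact hρpos
  · have himg : val '' (val ⁻¹' W) = W := by
      rw [Subtype.image_preimage_coe]
      exact inter_eq_self_of_subset_right (hWsub.trans inter_subset_left)
    have hWconn : IsPreconnected W := isPreconnected_connectedComponentIn
    rw [← Topology.IsInducing.subtypeVal.isPreconnected_image, himg]
    exact hWconn
  · refine subset_trans ?_ hVU
    apply preimage_mono
    refine subset_trans ?_ hball
    refine (hWsub.trans inter_subset_right).trans ?_
    exact closedBall_subset_ball (by linarith)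

end Nets

/-- A nonempty bounded open preconnected subset of `ℝ` is an open interval. -/
lemma open_preconnected_eq_Ioo {c : Set ℝ} (hopen : IsOpen c) (hconn : IsPreconnected c)
    (hne : c.Nonempty) (hbdd : c ⊆ Ioo 0 1) : ∃ a b : ℝ, a < b ∧ c = Ioo a b := by
  have hbdda : BddAbove c := (bddAbove_Ioo (a := (0:ℝ)) (b := 1)).mono hbdd
  have hbddb : BddBelow c := (bddBelow_Ioo : BddBelow (Ioo (0:ℝ) 1)).mono hbdd
  have hsub : c ⊆ Ioo (sInf c) (sSup c) := by
    intro x hx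
    obtain ⟨δ, hδpos, hδ⟩ := Metric.isOpen_iff.mp hopen x hx
    have h1 : x - δ/2 ∈ c := by
      refine hδ ?_
      simp only [Real.ball_eq_Ioo, mem_Ioo]
      constructor <;> linarith
    have h2 : x + δ/2 ∈ c := by
      refine hδ ?_
      simp only [Real.ball_eq_Ioo, mem_Ioo]
      constructor <;> linarith
    constructor
    · calc sInf c ≤ x - δ/2 := csInf_le hbddb h1
        _ < x := by linarith
    · calc x < x + δ/2 := by linarith
        _ ≤ sSup c := le_csSup hbdda h2
  have hsup : Ioo (sInf c) (sSup c) ⊆ c := by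
    intro x hx
    obtain ⟨u, hu, hux⟩ := exists_lt_of_csInf_lt hne hx.1
    obtain ⟨v, hv, hxv⟩ := exists_lt_of_lt_csSup hne hx.2
    exact hconn.Icc_subset hu hv ⟨hux.le, hxv.le⟩
  obtain ⟨x, hx⟩ := hne
  exact ⟨sInf c, sSup c, lt_trans (hsub hx).1 (hsub hx).2, subset_antisymm hsub hsup⟩

/-- Every open subset of `(0,1)` is a countable disjoint union of open intervals. -/
lemma isOpen_decomp {O : Set ℝ} (hO : IsOpen O) (hsub : O ⊆ Ioo 0 1) :
    ∃ fam : Set (Set ℝ), fam.Countable ∧ ⋃₀ fam = O ∧ fam.Pairwise Disjoint ∧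
      ∀ s ∈ fam, ∃ a b : ℝ, a < b ∧ s = Ioo a b := by
  classical
  set fam : Set (Set ℝ) :=
    (fun q : ℚ => connectedComponentIn O (q : ℝ)) '' {q : ℚ | (q : ℝ) ∈ O} with hfam
  have hmemIoo : ∀ s ∈ fam, ∃ a b : ℝ, a < b ∧ s = Ioo a b := by
    rintro s ⟨q, hq, rfl⟩
    exact open_preconnected_eq_Ioo hO.connectedComponentIn
      isPreconnected_connectedComponentIn ⟨_, mem_connectedComponentIn hq⟩
      ((connectedComponentIn_subset _ _).trans hsub)
  refine ⟨fam, (Set.to_countable _).image _, ?_, ?_, hmemIoo⟩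
  · apply subset_antisymm
    · apply sUnion_subset
      rintro s ⟨q, hq, rfl⟩
      exact connectedComponentIn_subset _ _
    · intro x hx
      have hxc : x ∈ connectedComponentIn O x := mem_connectedComponentIn hx
      obtain ⟨δ, hδpos, hδ⟩ := Metric.isOpen_iff.mp hO.connectedComponentIn x hxc
      obtain ⟨q, hq1, hq2⟩ := exists_rat_btwn (show x - δ < x by linarith)
      have hqc : (q : ℝ) ∈ connectedComponentIn O x := by
        refine hδ ?_
        simp only [Real.ball_eq_Ioo, mem_Ioo]
        constructor <;> linarith
      have hqO : (q : ℝ) ∈ O := connectedComponentIn_subset _ _ hqc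
      refine ⟨connectedComponentIn O (q : ℝ), ⟨q, hqO, rfl⟩, ?_⟩
      rw [← connectedComponentIn_eq hqc]
      exact hxc
  · rintro s1 ⟨q1, hq1, rfl⟩ s2 ⟨q2, hq2, rfl⟩ hne12
    rw [Set.disjoint_left]
    intro y hy1 hy2
    exact hne12 ((connectedComponentIn_eq hy1).trans (connectedComponentIn_eq hy2).symm)

variable {E : Type*} [NormedAddCommGroup E] [NormedSpace ℝ E]

/-- A nondegenerate closed segment minus a closed set containing both endpoints is a
countable disjoint union of open segments. -/
lemma segment_diff_decomp {a b : E} (hab : a ≠ b) {F : Set E} (hF : IsClosed F)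
    (haF : a ∈ F) (hbF : b ∈ F) :
    ∃ fam : Set (Set E), fam.Countable ∧ ⋃₀ fam = segment ℝ a b \ F ∧
      fam.Pairwise Disjoint ∧
      ∀ S ∈ fam, ∃ a' b' : E, a' ≠ b' ∧
        S = (fun t : ℝ => (1 - t) • a' + t • b') '' Ioo (0:ℝ) 1 := by
  classical
  set φ : ℝ → E := fun u => (1 - u) • a + u • b with hφ
  have hφcont : Continuous φ := by fun_prop
  have hφinj : Function.Injective φ := by
    intro s u hsu
    have h2 : (s - u) • (b - a) = (0 : E) := by
      have h3 : φ s - φ u = (s - u) • (b - a) := by simp only [hφ]; module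
      rw [hsu, sub_self] at h3
      exact h3.symm
    rcases smul_eq_zero.mp h2 with hcase | hcase
    · exact sub_eq_zero.mp hcase
    · exact absurd (sub_eq_zero.mp hcase).symm hab
  set O : Set ℝ := φ ⁻¹' Fᶜ ∩ Ioo 0 1 with hOdef
  have hOopen : IsOpen O := (hF.isOpen_compl.preimage hφcont).inter isOpen_Ioo
  have hφ0 : φ 0 = a := by simp [hφ]
  have hφ1 : φ 1 = b := by simp [hφ]
  have himg : segment ℝ a b \ F = φ '' O := by
    ext z
    constructor
    · rintro ⟨hzseg, hzF⟩
      rw [segment_eq_image] at hzseg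
      obtain ⟨s, hs, rfl⟩ := hzseg
      refine ⟨s, ⟨hzF, ?_, ?_⟩, rfl⟩
      · rcases hs.1.lt_or_eq with h | h
        · exact h
        · exfalso
          rw [← h] at hzF
          simp only [sub_zero, one_smul, zero_smul, add_zero] at hzF
          exact hzF haF
      · rcases hs.2.lt_or_eq with h | h
        · exact h
        · exfalso
          rw [h] at hzF
          simp only [sub_self, zero_smul, one_smul, zero_add] at hzF
          exact hzF hbF
    · rintro ⟨s, ⟨hsF, hsIoo⟩, rfl⟩
      refine ⟨?_, hsF⟩
      rw [segment_eq_image]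
      exact mem_image_of_mem φ ⟨hsIoo.1.le, hsIoo.2.le⟩
  obtain ⟨fam₀, hcnt, hUn, hdisj, hIoo⟩ := isOpen_decomp hOopen inter_subset_right
  refine ⟨(Set.image φ) '' fam₀, hcnt.image _, ?_, ?_, ?_⟩
  · calc ⋃₀ ((Set.image φ) '' fam₀) = φ '' ⋃₀ fam₀ := image_sUnion.symm
      _ = φ '' O := by rw [hUn]
      _ = segment ℝ a b \ F := himg.symm
  · rintro S1 ⟨s1, hs1, rfl⟩ S2 ⟨s2, hs2, rfl⟩ hne12
    have hs12 : s1 ≠ s2 := by rintro rfl; exact hne12 rfl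
    exact (Set.disjoint_image_iff hφinj).mpr (hdisj hs1 hs2 hs12)
  · rintro S ⟨s, hs, rfl⟩
    obtain ⟨α, β, hαβ, rfl⟩ := hIoo s hs
    refine ⟨φ α, φ β, fun hcon => absurd (hφinj hcon) hαβ.ne, ?_⟩
    have hmap : ∀ u : ℝ, (1 - u) • φ α + u • φ β = φ ((β - α) * u + α) := by
      intro u; simp only [hφ]; module
    have himg2 : (fun u : ℝ => (β - α) * u + α) '' Ioo 0 1 = Ioo α β := by
      have h2 : (β - α) * 0 + α = α := by ring
      have h3 : (β - α) * 1 + α = β := by ring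
      rw [image_affine_Ioo (show (0:ℝ) < β - α by linarith) α 0 1, h2, h3]
    calc φ '' Ioo α β = φ '' ((fun u : ℝ => (β - α) * u + α) '' Ioo 0 1) := by rw [himg2]
      _ = (fun u : ℝ => (1 - u) • φ α + u • φ β) '' Ioo 0 1 := by
          rw [image_image]
          exact image_congr (fun u _ => (hmap u).symm)

end Stmt18Aux

end Stmt18AuxSection

/-- every nonempty compact subset of `ℝ^d` is contained in a Peano
continuum `Z ⊆ ℝ^d` such that `Z ∖ X` is a countable disjoint union of open
line segments. -/
theorem stmt18 (d : ℕ) (hd : 1 ≤ d) (X : Set (EuclideanSpace ℝ (Fin d)))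
    (hne : X.Nonempty) (hcomp : IsCompact X) :
    ∃ Z : Set (EuclideanSpace ℝ (Fin d)), X ⊆ Z ∧
      IsCompact Z ∧ IsConnected Z ∧ LocallyConnectedSpace ↥Z ∧
      ∃ fam : Set (Set (EuclideanSpace ℝ (Fin d))), fam.Countable ∧
        Z \ X = ⋃₀ fam ∧ fam.Pairwise Disjoint ∧
        ∀ S ∈ fam, ∃ a b : EuclideanSpace ℝ (Fin d), a ≠ b ∧
          S = (fun t : ℝ => (1 - t) • a + t • b) '' Set.Ioo (0 : ℝ) 1 := by
  classical
  have hnets : ∀ n : ℕ, ∃ s : Set (EuclideanSpace ℝ (Fin d)), s ⊆ X ∧ s.Finite ∧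
      X ⊆ ⋃ y ∈ s, Metric.ball y (Stmt18Aux.rr n) :=
    fun n => hcomp.finite_cover_balls (Stmt18Aux.rr_pos n)
  choose s hs1 hs2 hs3 using hnets
  set t : ℕ → Set (EuclideanSpace ℝ (Fin d)) := fun n => ⋃ m ∈ Finset.range (n+1), s m with ht
  have htfin : ∀ n, (t n).Finite :=
    fun n => Set.Finite.biUnion (Finset.range (n+1)).finite_toSet (fun m _ => hs2 m)
  have htsub : ∀ n, t n ⊆ X := fun n => Set.iUnion₂_subset fun m _ => hs1 m
  have htmono : ∀ n, t n ⊆ t (n+1) := by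
    intro n
    refine Set.iUnion₂_subset fun m hm p hp => ?_
    exact Set.mem_biUnion
      (Finset.mem_range.mpr (by have := Finset.mem_range.mp hm; omega)) hp
  have hcov : ∀ n, ∀ x ∈ X, ∃ y, y ∈ t n ∧ dist x y < Stmt18Aux.rr n := by
    intro n x hx
    obtain ⟨y, hy, hxy⟩ := Set.mem_iUnion₂.mp (hs3 n hx)
    exact ⟨y, Set.mem_biUnion (Finset.self_mem_range_succ n) hy, Metric.mem_ball.mp hxy⟩
  set ν : ℕ → EuclideanSpace ℝ (Fin d) → EuclideanSpace ℝ (Fin d) := fun n x =>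
    if h : ∃ y, y ∈ t n ∧ dist x y < Stmt18Aux.rr n then h.choose else x with hν
  have hnet : Stmt18Aux.Nets X t ν := by
    refine ⟨htfin, htsub, htmono, ?_, ?_⟩
    · intro n x hx
      have hex := hcov n x hx
      simp only [hν, dif_pos hex]
      exact hex.choose_spec.1
    · intro n x hx
      have hex := hcov n x hx
      simp only [hν, dif_pos hex]
      exact hex.choose_spec.2
  obtain ⟨x₀, hx₀⟩ := hne
  have hEcnt : (Stmt18Aux.Edges t).Countable := by
    have hsub2 : Stmt18Aux.Edges t ⊆ ⋃ n : ℕ, Set.image2 (segment ℝ) (t n) (t n) := by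
      rintro S ⟨n, u, v, hu, hv, -, rfl⟩
      exact Set.mem_iUnion.mpr ⟨n, Set.mem_image2_of_mem hu hv⟩
    exact (Set.countable_iUnion
      (fun n => (Set.Finite.image2 _ (htfin n) (htfin n)).countable)).mono hsub2
  have hEne : (Stmt18Aux.Edges t).Nonempty :=
    ⟨segment ℝ (ν 0 x₀) (ν 0 x₀), 0, ν 0 x₀, ν 0 x₀, hnet.mem 0 x₀ hx₀, hnet.mem 0 x₀ hx₀,
      Or.inl rfl, rfl⟩
  obtain ⟨e, he⟩ := hEcnt.exists_eq_range hEne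
  set D : ℕ → Set (EuclideanSpace ℝ (Fin d)) :=
    fun k => e k \ (X ∪ ⋃ j ∈ Finset.range k, e j) with hD
  have hek_mem : ∀ k, e k ∈ Stmt18Aux.Edges t := by
    intro k; rw [he]; exact ⟨k, rfl⟩
  have hDZ : Stmt18Aux.Zset X t \ X = ⋃ k, D k := by
    ext w
    constructor
    · rintro ⟨hwZ, hwX⟩
      rcases hwZ with h | ⟨S, hSE, hwS⟩
      · exact absurd h hwX
      · rw [he] at hSE
        obtain ⟨k, rfl⟩ := hSE
        have hex : ∃ k, w ∈ e k := ⟨k, hwS⟩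
        refine Set.mem_iUnion.mpr ⟨Nat.find hex, Nat.find_spec hex, ?_⟩
        rintro (hcase | hcase)
        · exact hwX hcase
        · obtain ⟨j, hj, hwj⟩ := Set.mem_iUnion₂.mp hcase
          exact Nat.find_min hex (Finset.mem_range.mp hj) hwj
    · intro hw
      obtain ⟨k, hwe, hwn⟩ := Set.mem_iUnion.mp hw
      refine ⟨Or.inr ⟨e k, hek_mem k, hwe⟩, fun hX2 => hwn (Or.inl hX2)⟩
  have hDdisj : ∀ {j k : ℕ}, j < k → Disjoint (D j) (D k) := by
    intro j k hjk
    rw [Set.disjoint_left]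
    rintro w ⟨hwj, -⟩ ⟨-, hwk⟩
    exact hwk (Or.inr (Set.mem_biUnion (Finset.mem_range.mpr hjk) hwj))
  have hkdec : ∀ k : ℕ, ∃ fk : Set (Set (EuclideanSpace ℝ (Fin d))), fk.Countable ∧
      ⋃₀ fk = D k ∧ fk.Pairwise Disjoint ∧ ∀ S ∈ fk,
      ∃ a b : EuclideanSpace ℝ (Fin d), a ≠ b ∧
      S = (fun t : ℝ => (1 - t) • a + t • b) '' Set.Ioo (0:ℝ) 1 := by
    intro k
    obtain ⟨n, u, v, hu, hv, -, hseq⟩ := hek_mem k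
    have huX : u ∈ X := htsub n hu
    have hvX : v ∈ X := htsub n hv
    have hFclosed : IsClosed (X ∪ ⋃ j ∈ Finset.range k, e j) := by
      refine hcomp.isClosed.union (isClosed_biUnion_finset fun j _ => ?_)
      obtain ⟨n', u', v', -, -, -, h'⟩ := hek_mem j
      rw [h']
      exact Stmt18Aux.Nets.isClosed_seg u' v'
    by_cases huv : u = v
    · refine ⟨∅, Set.countable_empty, ?_, Set.pairwise_empty _, by simp⟩
      rw [Set.sUnion_empty]
      have hsub3 : D k ⊆ ∅ := by
        rintro w ⟨hw1, hw2⟩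
        rw [hseq, huv, segment_same] at hw1
        exact hw2 (Or.inl (by rw [Set.mem_singleton_iff.mp hw1]; exact hvX))
      exact (Set.subset_empty_iff.mp hsub3).symm
    · obtain ⟨fk, h1, h2, h3, h4⟩ :=
        Stmt18Aux.segment_diff_decomp huv hFclosed (Or.inl huX) (Or.inl hvX)
      refine ⟨fk, h1, ?_, h3, h4⟩
      rw [h2]
      show segment ℝ u v \ (X ∪ ⋃ j ∈ Finset.range k, e j) =
        e k \ (X ∪ ⋃ j ∈ Finset.range k, e j)
      rw [hseq]
  choose famF hf1 hf2 hf3 hf4 using hkdec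
  refine ⟨Stmt18Aux.Zset X t, Stmt18Aux.Nets.X_subset_Zset,
    hnet.zset_isCompact hcomp ⟨x₀, hx₀⟩,
    ⟨⟨x₀, Or.inl hx₀⟩, hnet.zset_preconnected hx₀⟩,
    hnet.zset_locallyConnected hcomp ⟨x₀, hx₀⟩,
    ⋃ k, famF k, Set.countable_iUnion hf1, ?_, ?_, ?_⟩
  · rw [hDZ, Set.sUnion_iUnion]
    exact Set.iUnion_congr fun k => (hf2 k).symm
  · rintro S1 hS1 S2 hS2 hne12
    obtain ⟨k1, hk1⟩ := Set.mem_iUnion.mp hS1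
    obtain ⟨k2, hk2⟩ := Set.mem_iUnion.mp hS2
    rcases lt_trichotomy k1 k2 with hlt | heq | hgt
    · exact (hDdisj hlt).mono ((hf2 k1) ▸ Set.subset_sUnion_of_mem hk1)
        ((hf2 k2) ▸ Set.subset_sUnion_of_mem hk2)
    · subst heq
      exact hf3 k1 hk1 hk2 hne12
    · exact ((hDdisj hgt).symm).mono ((hf2 k1) ▸ Set.subset_sUnion_of_mem hk1)
        ((hf2 k2) ▸ Set.subset_sUnion_of_mem hk2)
  · intro S hS
    obtain ⟨k, hk⟩ := Set.mem_iUnion.mp hS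
    exact hf4 k S hk
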